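/- For any integer n ≥ 2, the equidistant dimension of the squared grid graph P_n □ P_n equals ⌈n²/2⌉. -/

import Mathlib

set_option maxHeartbeats 4000000

open SimpleGraph

/-- A distance-equalizer set: any two vertices outside `D` are equidistant
from some vertex of `D`. -/
def IsDistEqSet {V : Type*} (G : SimpleGraph V) (D : Set V) : Prop :=
  ∀ x ∉ D, ∀ y ∉ D, ∃ w ∈ D, G.dist x w = G.dist y w

/-- The equidistant dimension: minimum cardinality of a distance-equalizer set. -/
noncomputable def eqdim {V : Type*} [Fintype V] (G : SimpleGraph V) : ℕ :=
  sInf {k | ∃ D : Finset V, IsDistEqSet G (D : Set V) ∧ D.card = k}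

section Aux

lemma path_walk_le' {n : ℕ} {i j : Fin n} (p : (pathGraph n).Walk i j) :
    (i.val - j.val) + (j.val - i.val) ≤ p.length := by
  induction p with
  | nil => omega
  | cons h q ih =>
    rw [pathGraph_adj] at h
    rw [Walk.length_cons]
    omega

lemma path_dist_le_aux' {n : ℕ} (d : ℕ) : ∀ (i j : Fin n), j.val = i.val + d →
    (pathGraph n).dist i j ≤ d := by
  induction d with
  | zero => intro i j h; have : i = j := Fin.ext (by omega); simp [this]
  | succ d ih =>
    intro i j h
    have hi1 : i.val + 1 < n := by omega
    set i' : Fin n := ⟨i.val + 1, hi1⟩ with hi'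
    have hadj : (pathGraph n).Adj i i' := by rw [pathGraph_adj]; left; rfl
    calc (pathGraph n).dist i j ≤ (pathGraph n).dist i i' + (pathGraph n).dist i' j :=
          Connected.dist_triangle (by
            haveI : Nonempty (Fin n) := ⟨i⟩
            exact Connected.mk (pathGraph_preconnected n))
      _ ≤ d + 1 := by
          have h1 : (pathGraph n).dist i i' ≤ 1 := dist_le (Walk.cons hadj Walk.nil)
          have h2 : (pathGraph n).dist i' j ≤ d := ih i' j (by simp [hi']; omega)
          omega

lemma pathGraph_dist' {n : ℕ} (i j : Fin n) :
    (pathGraph n).dist i j = (i.val - j.val) + (j.val - i.val) := by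
  apply le_antisymm
  · rcases le_or_gt i.val j.val with h | h
    · have := path_dist_le_aux' (j.val - i.val) i j (by omega); omega
    · have := path_dist_le_aux' (i.val - j.val) j i (by omega)
      rw [dist_comm]; omega
  · have hr : (pathGraph n).Reachable i j := pathGraph_preconnected n i j
    obtain ⟨p, hp⟩ := hr.exists_walk_length_eq_dist
    rw [← hp]; exact path_walk_le' p

variable {α β : Type*} {G : SimpleGraph α} {H : SimpleGraph β}

lemma boxProd_walk_le' (hG : G.Connected) (hH : H.Connected) {x y : α × β}
    (p : (G □ H).Walk x y) : G.dist x.1 y.1 + H.dist x.2 y.2 ≤ p.length := by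
  induction p with
  | nil => simp
  | @cons u v w h q ih =>
    rw [Walk.length_cons]
    rcases h with ⟨h1, h2⟩ | ⟨h1, h2⟩
    · have t1 : G.dist u.1 w.1 ≤ G.dist u.1 v.1 + G.dist v.1 w.1 := hG.dist_triangle
      have t2 : G.dist u.1 v.1 ≤ 1 := dist_le (Walk.cons h1 Walk.nil)
      have t3 : H.dist u.2 w.2 = H.dist v.2 w.2 := by rw [h2]
      omega
    · have t1 : H.dist u.2 w.2 ≤ H.dist u.2 v.2 + H.dist v.2 w.2 := hH.dist_triangle
      have t2 : H.dist u.2 v.2 ≤ 1 := dist_le (Walk.cons h1 Walk.nil)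
      have t3 : G.dist u.1 w.1 = G.dist v.1 w.1 := by rw [h2]
      omega

lemma boxProd_dist' (hG : G.Connected) (hH : H.Connected) (x y : α × β) :
    (G □ H).dist x y = G.dist x.1 y.1 + H.dist x.2 y.2 := by
  apply le_antisymm
  · obtain ⟨x1, x2⟩ := x
    obtain ⟨y1, y2⟩ := y
    obtain ⟨w1, hw1⟩ := hG.exists_walk_length_eq_dist x1 y1
    obtain ⟨w2, hw2⟩ := hH.exists_walk_length_eq_dist x2 y2
    have hle := dist_le ((w1.boxProdLeft H x2).append (w2.boxProdRight G y1))
    have e : ((w1.boxProdLeft H x2).append (w2.boxProdRight G y1)).length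
        = w1.length + w2.length := by
      rw [Walk.length_append]
      exact congrArg₂ (· + ·) (Walk.length_map _ _) (Walk.length_map _ _)
    rw [e, hw1, hw2] at hle
    exact hle
  · have hr : (G □ H).Reachable x y := (hG.preconnected.boxProd hH.preconnected) x y
    obtain ⟨p, hp⟩ := hr.exists_walk_length_eq_dist
    rw [← hp]; exact boxProd_walk_le' hG hH p

lemma count_row' (r : ℕ) (m : ℕ) :
    ((Finset.range m).sum fun j => if (r + j) % 2 = 0 then (1:ℕ) else 0)
      = (m + 1 - r % 2) / 2 := by
  induction m with
  | zero => simp; omega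
  | succ m ih => rw [Finset.sum_range_succ, ih]; split_ifs <;> omega

lemma colsum' (a b : ℕ) : ∀ k : ℕ,
    ((Finset.range (2*k)).sum fun i => if i % 2 = 0 then a else b) = k*(a+b) ∧
    ((Finset.range (2*k+1)).sum fun i => if i % 2 = 0 then a else b) = k*(a+b) + a := by
  intro k
  induction k with
  | zero => simp
  | succ k ih =>
    obtain ⟨ih1, ih2⟩ := ih
    have he : ((Finset.range (2*(k+1))).sum fun i => if i % 2 = 0 then a else b)
        = (k+1)*(a+b) := by
      have h2 : 2*(k+1) = (2*k+1)+1 := by ring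
      rw [h2, Finset.sum_range_succ, ih2, if_neg (by omega)]
      ring
    refine ⟨he, ?_⟩
    rw [Finset.sum_range_succ, he, if_pos (by omega)]

lemma card_even_class' (n : ℕ) :
    (Finset.univ.filter fun v : Fin n × Fin n => (v.1.val + v.2.val) % 2 = 0).card
      = (n^2 + 1) / 2 := by
  rw [Finset.card_filter, Fintype.sum_prod_type]
  have h1 : ∀ i : Fin n,
      (∑ j : Fin n, if (i.val + j.val) % 2 = 0 then (1:ℕ) else 0)
        = (n + 1 - i.val % 2) / 2 := fun i => by
    rw [Fin.sum_univ_eq_sum_range (fun j => if (i.val + j) % 2 = 0 then (1:ℕ) else 0)]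
    exact count_row' i.val n
  calc (∑ i : Fin n, ∑ j : Fin n, if (i.val + j.val) % 2 = 0 then (1:ℕ) else 0)
      = ∑ i : Fin n, (n + 1 - i.val % 2) / 2 := Finset.sum_congr rfl fun i _ => h1 i
    _ = (Finset.range n).sum fun i => (n + 1 - i % 2) / 2 :=
        Fin.sum_univ_eq_sum_range (fun i => (n + 1 - i % 2) / 2) n
    _ = (Finset.range n).sum fun i => if i % 2 = 0 then (n+1)/2 else n/2 :=
        Finset.sum_congr rfl fun i _ => by split_ifs <;> omega
    _ = (n^2 + 1) / 2 := by
        rcases Nat.even_or_odd' n with ⟨k, hk | hk⟩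
        · subst hk
          rw [(colsum' ((2*k+1)/2) ((2*k)/2) k).1]
          have h2 : (2*k+1)/2 = k := by omega
          have h3 : (2*k)/2 = k := by omega
          rw [h2, h3]
          obtain ⟨K, hK⟩ : ∃ K, k*(k+k) = K := ⟨_, rfl⟩
          have h4 : (2*k)^2 = 2*K := by rw [← hK]; ring
          rw [hK, h4]; omega
        · subst hk
          rw [(colsum' ((2*k+1+1)/2) ((2*k+1)/2) k).2]
          have h2 : (2*k+1+1)/2 = k+1 := by omega
          have h3 : (2*k+1)/2 = k := by omega
          rw [h2, h3]
          obtain ⟨K, hK⟩ : ∃ K, k*((k+1)+k) = K := ⟨_, rfl⟩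
          have h4 : (2*k+1)^2 + 1 = 2*(K + (k+1)) := by rw [← hK]; ring
          rw [hK]; omega

/-- Sorted case: `x1 ≤ y1` and the horizontal gap dominates the vertical gap. -/
lemma arith_sorted' (n x1 x2 y1 y2 : ℕ) (hn : 2 ≤ n)
    (hx1 : x1 < n) (hx2 : x2 < n) (hy1 : y1 < n) (hy2 : y2 < n)
    (hx : (x1 + x2) % 2 = 1) (hy : (y1 + y2) % 2 = 1)
    (hs : x1 ≤ y1) (hd : (x2 - y2) + (y2 - x2) ≤ y1 - x1) :
    ∃ w1 w2, w1 < n ∧ w2 < n ∧ (w1 + w2) % 2 = 0 ∧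
      (x1 - w1) + (w1 - x1) + ((x2 - w2) + (w2 - x2)) =
      (y1 - w1) + (w1 - y1) + ((y2 - w2) + (w2 - y2)) := by
  by_cases hxy : x1 = y1 ∧ x2 = y2
  · refine ⟨0, 0, ?_, ?_, ?_, ?_⟩ <;> omega
  obtain ⟨s, hsv⟩ : ∃ s, (y1 - x1) + ((x2 - y2) + (y2 - x2)) = 2 * s := by
    refine ⟨((y1 - x1) + ((x2 - y2) + (y2 - x2))) / 2, by omega⟩
  by_cases hp : (x1 + s + x2) % 2 = 0
  · refine ⟨x1 + s, x2, ?_, ?_, ?_, ?_⟩ <;> omega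
  rcases lt_trichotomy x2 y2 with h2 | h2 | h2
  · by_cases h0 : 1 ≤ x2
    · refine ⟨x1 + s, x2 - 1, ?_, ?_, ?_, ?_⟩ <;> omega
    · by_cases h1 : y2 + 1 < n
      · refine ⟨x1 + (s - ((x2 - y2) + (y2 - x2))), y2 + 1, ?_, ?_, ?_, ?_⟩ <;> omega
      · exfalso; omega
  · by_cases h1 : x2 + 1 < n
    · refine ⟨x1 + s, x2 + 1, ?_, ?_, ?_, ?_⟩ <;> omega
    · refine ⟨x1 + s, x2 - 1, ?_, ?_, ?_, ?_⟩ <;> omega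
  · by_cases h1 : x2 + 1 < n
    · refine ⟨x1 + s, x2 + 1, ?_, ?_, ?_, ?_⟩ <;> omega
    · by_cases h0 : 1 ≤ y2
      · refine ⟨x1 + (s - ((x2 - y2) + (y2 - x2))), y2 - 1, ?_, ?_, ?_, ?_⟩ <;> omega
      · refine ⟨0, 0, ?_, ?_, ?_, ?_⟩ <;> omega

lemma arith_main' (n x1 x2 y1 y2 : ℕ) (hn : 2 ≤ n)
    (hx1 : x1 < n) (hx2 : x2 < n) (hy1 : y1 < n) (hy2 : y2 < n)
    (hx : (x1 + x2) % 2 = 1) (hy : (y1 + y2) % 2 = 1) :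
    ∃ w1 w2, w1 < n ∧ w2 < n ∧ (w1 + w2) % 2 = 0 ∧
      (x1 - w1) + (w1 - x1) + ((x2 - w2) + (w2 - x2)) =
      (y1 - w1) + (w1 - y1) + ((y2 - w2) + (w2 - y2)) := by
  rcases le_total ((x2 - y2) + (y2 - x2)) ((x1 - y1) + (y1 - x1)) with hc | hc
  · rcases le_total x1 y1 with h | h
    · exact arith_sorted' n x1 x2 y1 y2 hn hx1 hx2 hy1 hy2 hx hy h (by omega)
    · obtain ⟨w1, w2, a, b, c, d⟩ :=
        arith_sorted' n y1 y2 x1 x2 hn hy1 hy2 hx1 hx2 hy hx h (by omega)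
      exact ⟨w1, w2, a, b, c, by omega⟩
  · rcases le_total x2 y2 with h | h
    · obtain ⟨w1, w2, a, b, c, d⟩ :=
        arith_sorted' n x2 x1 y2 y1 hn hx2 hx1 hy2 hy1 (by omega) (by omega) h (by omega)
      exact ⟨w2, w1, b, a, by omega, by omega⟩
    · obtain ⟨w1, w2, a, b, c, d⟩ :=
        arith_sorted' n y2 y1 x2 x1 hn hy2 hy1 hx2 hx1 (by omega) (by omega) h (by omega)
      exact ⟨w2, w1, b, a, by omega, by omega⟩

end Aux

theorem stmt_18 (n : ℕ) (hn : 2 ≤ n) :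
    eqdim (pathGraph n □ pathGraph n) = (n ^ 2 + 1) / 2 := by
  haveI : Nonempty (Fin n) := ⟨⟨0, by omega⟩⟩
  have hconn : (pathGraph n).Connected := Connected.mk (pathGraph_preconnected n)
  have hdist : ∀ u v : Fin n × Fin n, (pathGraph n □ pathGraph n).dist u v =
      ((u.1.val - v.1.val) + (v.1.val - u.1.val)) +
      ((u.2.val - v.2.val) + (v.2.val - u.2.val)) := by
    intro u v
    rw [boxProd_dist' hconn hconn, pathGraph_dist', pathGraph_dist']
  set E := Finset.univ.filter
    (fun v : Fin n × Fin n => (v.1.val + v.2.val) % 2 = 0) with hE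
  have hmemE : ∀ v : Fin n × Fin n, v ∈ E ↔ (v.1.val + v.2.val) % 2 = 0 := by
    intro v; rw [hE, Finset.mem_filter]; simp
  have hEcard : E.card = (n^2+1)/2 := card_even_class' n
  have hEeq : IsDistEqSet (pathGraph n □ pathGraph n) (E : Set (Fin n × Fin n)) := by
    intro x hx y hy
    have hx' : (x.1.val + x.2.val) % 2 = 1 := by
      have : ¬ (x.1.val + x.2.val) % 2 = 0 := fun h =>
        hx (Finset.mem_coe.mpr ((hmemE x).mpr h))
      omega
    have hy' : (y.1.val + y.2.val) % 2 = 1 := by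
      have : ¬ (y.1.val + y.2.val) % 2 = 0 := fun h =>
        hy (Finset.mem_coe.mpr ((hmemE y).mpr h))
      omega
    obtain ⟨w1, w2, hw1, hw2, hwp, hweq⟩ :=
      arith_main' n x.1.val x.2.val y.1.val y.2.val hn x.1.2 x.2.2 y.1.2 y.2.2 hx' hy'
    refine ⟨(⟨w1, hw1⟩, ⟨w2, hw2⟩), ?_, ?_⟩
    · exact Finset.mem_coe.mpr ((hmemE _).mpr hwp)
    · rw [hdist, hdist]
      simp only []
      omega
  have hpar : ∀ u v : Fin n × Fin n,
      ((pathGraph n □ pathGraph n).dist u v) % 2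
        = (u.1.val + u.2.val + v.1.val + v.2.val) % 2 := by
    intro u v; rw [hdist]; omega
  have hlow : ∀ D : Finset (Fin n × Fin n),
      IsDistEqSet (pathGraph n □ pathGraph n) (D : Set (Fin n × Fin n)) →
      (n^2+1)/2 ≤ D.card := by
    intro D hD
    by_cases hED : E ⊆ D
    · calc (n^2+1)/2 = E.card := hEcard.symm
        _ ≤ D.card := Finset.card_le_card hED
    · obtain ⟨e, heE, heD⟩ := Finset.not_subset.mp hED
      have he2 : (e.1.val + e.2.val) % 2 = 0 := (hmemE e).mp heE
      set O := Finset.univ.filter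
        (fun v : Fin n × Fin n => ¬ (v.1.val + v.2.val) % 2 = 0) with hO
      have hmemO : ∀ v : Fin n × Fin n, v ∈ O ↔ ¬ (v.1.val + v.2.val) % 2 = 0 := by
        intro v; rw [hO, Finset.mem_filter]; simp
      have hOD : O ⊆ D := by
        intro o hoO
        by_contra hoD
        obtain ⟨w, hwD, hweq⟩ := hD e (fun h => heD (Finset.mem_coe.mp h))
          o (fun h => hoD (Finset.mem_coe.mp h))
        have p1 := hpar e w
        have p2 := hpar o w
        have ho2 := (hmemO o).mp hoO
        omega
      have hcardsum : E.card + O.card = n^2 := by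
        have h1 := Finset.card_filter_add_card_filter_not
          (s := (Finset.univ : Finset (Fin n × Fin n)))
          (p := fun v : Fin n × Fin n => (v.1.val + v.2.val) % 2 = 0)
        have h2 : (Finset.univ : Finset (Fin n × Fin n)).card = n^2 := by
          simp [Finset.card_univ]
          ring
        rw [← h2]
        exact h1
      rcases Nat.even_or_odd' n with ⟨k, hk | hk⟩
      · obtain ⟨K, hK⟩ : ∃ K, n^2 = 4*K := ⟨k*k, by subst hk; ring⟩
        have := Finset.card_le_card hOD
        omega
      · have hn1 : n - 1 < n := by omega
        set c0 : Fin n × Fin n := (⟨0, by omega⟩, ⟨0, by omega⟩) with hc0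
        set c1 : Fin n × Fin n := (⟨n-1, hn1⟩, ⟨n-1, hn1⟩) with hc1
        have hget : ∃ v, v ∈ D ∧ (v.1.val + v.2.val) % 2 = 0 := by
          by_cases h0 : c0 ∈ D
          · exact ⟨c0, h0, by rw [hc0]; simp⟩
          by_cases h1 : c1 ∈ D
          · exact ⟨c1, h1, by rw [hc1]; simp; omega⟩
          obtain ⟨w, hwD, hweq⟩ := hD c0 (fun h => h0 (Finset.mem_coe.mp h))
            c1 (fun h => h1 (Finset.mem_coe.mp h))
          refine ⟨w, hwD, ?_⟩
          rw [hdist c0 w, hdist c1 w] at hweq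
          rw [hc0, hc1] at hweq
          simp only [] at hweq
          omega
        obtain ⟨v, hvD, hv⟩ := hget
        have hvO : v ∉ O := fun h => ((hmemO v).mp h) hv
        have hins : insert v O ⊆ D := by
          intro z hz
          rcases Finset.mem_insert.mp hz with h | h
          · exact h ▸ hvD
          · exact hOD h
        have hci : (insert v O).card = O.card + 1 := Finset.card_insert_of_notMem hvO
        have hle := Finset.card_le_card hins
        obtain ⟨K, hK⟩ : ∃ K, n^2 = 4*K + 1 := ⟨k*k + k, by subst hk; ring⟩
        omega
  have hmem : (n^2+1)/2 ∈ {k | ∃ D : Finset (Fin n × Fin n),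
      IsDistEqSet (pathGraph n □ pathGraph n) (D : Set (Fin n × Fin n)) ∧ D.card = k} :=
    ⟨E, hEeq, hEcard⟩
  apply le_antisymm
  · exact Nat.sInf_le hmem
  · apply le_csInf ⟨_, hmem⟩
    rintro k ⟨D, hD1, rfl⟩
    exact hlow D hD1
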